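/- Let X be a Banach space, ρ = (ρ_j)_{j≥1} a sequence with ρ_j > 1 for all j, and y ∈ Y. For v = (v_ν)_{ν∈F} ∈ ℓ_1(F, X) define (T_{ρ,y} v)_ν := (ρ − |y|)^ν Σ_{μ≥ν} v_μ · (μ!/((μ−ν)! ν!)) · ρ^{−μ} y^{μ−ν}. Then, with no summability assumption on the sequence (|y_j|/ρ_j)_{j≥1}, one has Σ_{ν∈F} ‖(T_{ρ,y} v)_ν‖_X ≤ Σ_{μ∈F} ‖v_μ‖_X, i.e. ‖T_{ρ,y}‖_{ℓ_1(F,X)→ℓ_1(F,X)} ≤ 1. -/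
import Mathlib


open scoped BigOperators ENNReal

noncomputable section

/-- The set `F` of finitely supported multi-indices. -/
abbrev MIdx : Type := ℕ →₀ ℕ

/-- `ρ^ν := ∏_j ρ_j^{ν_j}` for a finitely supported multi-index `ν`. -/
def mpow (ρ : ℕ → ℝ) (ν : MIdx) : ℝ := ν.prod fun j k => ρ j ^ k

/-- `μ!/((μ-ν)!ν!) = ∏_j C(μ_j, ν_j)` (meaningful for `ν ≤ μ`). -/
def mchoose (μ ν : MIdx) : ℕ := μ.prod fun j k => k.choose (ν j)

lemma mpow_eq_prod {f : ℕ → ℝ} {ν : MIdx} {s : Finset ℕ} (h : ν.support ⊆ s) :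
    mpow f ν = ∏ j ∈ s, f j ^ ν j :=
  Finsupp.prod_of_support_subset ν h _ (fun j _ => pow_zero _)

lemma mpow_nonneg {f : ℕ → ℝ} (hf : ∀ j, 0 ≤ f j) (ν : MIdx) : 0 ≤ mpow f ν :=
  Finset.prod_nonneg fun j _ => pow_nonneg (hf j) _

lemma mpow_pos {f : ℕ → ℝ} (hf : ∀ j, 0 < f j) (ν : MIdx) : 0 < mpow f ν :=
  Finset.prod_pos fun j _ => pow_pos (hf j) _

lemma abs_mpow (f : ℕ → ℝ) (ν : MIdx) : |mpow f ν| = mpow (fun j => |f j|) ν := by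
  simp only [mpow, Finsupp.prod, Finset.abs_prod, abs_pow]

lemma mchoose_eq_prod (μ ν : MIdx) :
    (mchoose μ ν : ℝ) = ∏ j ∈ μ.support, ((μ j).choose (ν j) : ℝ) := by
  simp [mchoose, Finsupp.prod]

/-- Multivariate binomial theorem over `Finset.Iic μ`. -/
lemma sum_Iic_binomial (f g : ℕ → ℝ) (μ : MIdx) :
    ∑ ν ∈ Finset.Iic μ, mpow f ν * ((mchoose μ ν : ℝ) * mpow g (μ - ν))
      = mpow (fun j => f j + g j) μ := by
  classical
  have hterm : ∀ ν ∈ Finset.Iic μ,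
      mpow f ν * ((mchoose μ ν : ℝ) * mpow g (μ - ν))
        = ∏ j ∈ μ.support,
            (f j ^ ν j * (((μ j).choose (ν j) : ℝ) * g j ^ (μ j - ν j))) := by
    intro ν hν
    rw [Finset.mem_Iic] at hν
    have h1 : ν.support ⊆ μ.support := Finsupp.support_mono hν
    have h2 : (μ - ν).support ⊆ μ.support := Finsupp.support_mono (tsub_le_self : μ - ν ≤ μ)
    rw [mpow_eq_prod h1, mpow_eq_prod h2, mchoose_eq_prod,
      ← Finset.prod_mul_distrib, ← Finset.prod_mul_distrib]
    exact Finset.prod_congr rfl fun j _ => by rw [Finsupp.tsub_apply]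
  rw [Finset.sum_congr rfl hterm]
  have hrhs : mpow (fun j => f j + g j) μ = ∏ j ∈ μ.support,
      ∑ k ∈ Finset.range (μ j + 1),
        (f j ^ k * (((μ j).choose k : ℝ) * g j ^ (μ j - k))) := by
    rw [mpow_eq_prod (le_refl μ.support)]
    refine Finset.prod_congr rfl fun j _ => ?_
    rw [add_pow]
    exact Finset.sum_congr rfl fun k _ => by ring
  rw [hrhs, Finset.prod_sum]
  refine (Finset.sum_bij' (fun p hp => Finsupp.indicator μ.support fun j hj => p j hj)
      (fun ν hν => fun j _ => ν j) ?_ ?_ ?_ ?_ ?_).symm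
  · intro p hp
    rw [Finset.mem_Iic, Finsupp.le_def]
    intro j
    by_cases hj : j ∈ μ.support
    · rw [Finsupp.indicator_of_mem hj]
      have := (Finset.mem_pi.1 hp) j hj
      rw [Finset.mem_range] at this
      omega
    · rw [Finsupp.indicator_of_notMem hj]
      exact Nat.zero_le _
  · intro ν hν
    rw [Finset.mem_Iic] at hν
    refine Finset.mem_pi.2 fun j hj => ?_
    show ν j ∈ Finset.range (μ j + 1)
    rw [Finset.mem_range]
    have := hν j
    omega
  · intro p hp
    funext j hj
    show (Finsupp.indicator μ.support fun j hj => p j hj) j = p j hj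
    rw [Finsupp.indicator_of_mem hj]
  · intro ν hν
    rw [Finset.mem_Iic] at hν
    ext j
    by_cases hj : j ∈ μ.support
    · rw [Finsupp.indicator_of_mem hj]
    · rw [Finsupp.indicator_of_notMem hj]
      have : j ∉ ν.support := fun h => hj (Finsupp.support_mono hν h)
      rw [Finsupp.notMem_support_iff] at this
      exact this.symm
  · intro p hp
    rw [← Finset.prod_attach μ.support
      (fun j => ((f j : ℝ) ^ (Finsupp.indicator μ.support fun j hj => p j hj) j *
        (((μ j).choose ((Finsupp.indicator μ.support fun j hj => p j hj) j) : ℝ) *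
          g j ^ (μ j - (Finsupp.indicator μ.support fun j hj => p j hj) j))))]
    refine Finset.prod_congr rfl fun x _ => ?_
    rw [Finsupp.indicator_of_mem x.2]

/-- Each term of the multivariate binomial sum is at most the full sum. -/
lemma term_le_binomial {f g : ℕ → ℝ} (hf : ∀ j, 0 ≤ f j) (hg : ∀ j, 0 ≤ g j)
    {ν μ : MIdx} (h : ν ≤ μ) :
    mpow f ν * ((mchoose μ ν : ℝ) * mpow g (μ - ν)) ≤ mpow (fun j => f j + g j) μ := by
  rw [← sum_Iic_binomial f g μ]
  refine Finset.single_le_sum (f := fun ν => mpow f ν * ((mchoose μ ν : ℝ) * mpow g (μ - ν)))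
    (fun i _ => ?_) (Finset.mem_Iic.2 h)
  have := mpow_nonneg hf i
  have := mpow_nonneg hg (μ - i)
  positivity

/-- The operator `T_{ρ,y}` has `ℓ_1(F,X) → ℓ_1(F,X)` norm at most `1`,
with no summability assumption on `(|y_j|/ρ_j)_j`:
`Σ_ν ‖(T_{ρ,y} v)_ν‖ ≤ Σ_μ ‖v_μ‖`. The sums on both sides are taken in `ℝ≥0∞`;
the first conjunct asserts the absolute convergence of the series defining `T_{ρ,y} v`. -/
theorem operator_l1_bound
    {X : Type*} [NormedAddCommGroup X] [NormedSpace ℝ X] [CompleteSpace X]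
    (ρ : ℕ → ℝ) (hρ : ∀ j, 1 < ρ j)
    (y : ℕ → ℝ) (hy : ∀ j, |y j| ≤ 1)
    (v : MIdx → X) (hv : Summable fun μ : MIdx => ‖v μ‖)
    (T : MIdx → X)
    (hT : ∀ ν : MIdx, T ν = mpow (fun j => ρ j - |y j|) ν •
      ∑' μ : {μ : MIdx // ν ≤ μ},
        ((mchoose μ.1 ν : ℝ) * (mpow ρ μ.1)⁻¹ * mpow y (μ.1 - ν)) • v μ.1) :
    (∀ ν : MIdx, Summable fun μ : {μ : MIdx // ν ≤ μ} =>
      ‖((mchoose μ.1 ν : ℝ) * (mpow ρ μ.1)⁻¹ * mpow y (μ.1 - ν)) • v μ.1‖) ∧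
    ∑' ν : MIdx, ENNReal.ofReal ‖T ν‖ ≤ ∑' μ : MIdx, ENNReal.ofReal ‖v μ‖ := by
  classical
  set a : ℕ → ℝ := fun j => ρ j - |y j| with ha_def
  have ha : ∀ j, 0 < a j := fun j => by have h1 := hρ j; have h2 := hy j; simp [ha_def]; linarith
  have hρpos : ∀ j, 0 < ρ j := fun j => lt_trans one_pos (hρ j)
  have hAρ : ∀ j, a j + |y j| = ρ j := fun j => by simp [ha_def]
  have habs : ∀ j, (0:ℝ) ≤ |y j| := fun j => abs_nonneg _
  -- the key pointwise bound
  have key : ∀ {ν μ : MIdx}, ν ≤ μ →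
      mpow a ν * ((mchoose μ ν : ℝ) * mpow (fun j => |y j|) (μ - ν)) ≤ mpow ρ μ := by
    intro ν μ h
    have := term_le_binomial (fun j => (ha j).le) habs h
    have heq : (fun j => a j + |y j|) = ρ := funext hAρ
    rwa [heq] at this
  -- norm of the coefficient
  have hcabs : ∀ (ν μ : MIdx),
      |(mchoose μ ν : ℝ) * (mpow ρ μ)⁻¹ * mpow y (μ - ν)|
        = (mchoose μ ν : ℝ) * (mpow ρ μ)⁻¹ * mpow (fun j => |y j|) (μ - ν) := by
    intro ν μ
    rw [abs_mul, abs_mul, abs_mpow, abs_of_nonneg (by positivity : (0:ℝ) ≤ (mchoose μ ν : ℝ)),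
      abs_of_nonneg (inv_nonneg.2 (mpow_pos hρpos μ).le)]
  have hApos : ∀ ν : MIdx, 0 < mpow a ν := mpow_pos ha
  -- uniform bound on coefficients
  have hcle : ∀ (ν μ : MIdx), ν ≤ μ →
      |(mchoose μ ν : ℝ) * (mpow ρ μ)⁻¹ * mpow y (μ - ν)| ≤ (mpow a ν)⁻¹ := by
    intro ν μ h
    rw [hcabs]
    have hk := key h
    have hρμ : 0 < mpow ρ μ := mpow_pos hρpos μ
    have h1 : mpow a ν * ((mchoose μ ν : ℝ) * (mpow ρ μ)⁻¹ * mpow (fun j => |y j|) (μ - ν))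
        ≤ 1 := by
      calc mpow a ν * ((mchoose μ ν : ℝ) * (mpow ρ μ)⁻¹ * mpow (fun j => |y j|) (μ - ν))
          = (mpow a ν * ((mchoose μ ν : ℝ) * mpow (fun j => |y j|) (μ - ν))) * (mpow ρ μ)⁻¹ := by
            ring
        _ ≤ mpow ρ μ * (mpow ρ μ)⁻¹ :=
            mul_le_mul_of_nonneg_right hk (inv_nonneg.2 hρμ.le)
        _ = 1 := mul_inv_cancel₀ hρμ.ne'
    calc (mchoose μ ν : ℝ) * (mpow ρ μ)⁻¹ * mpow (fun j => |y j|) (μ - ν)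
        = (mpow a ν)⁻¹ * (mpow a ν *
            ((mchoose μ ν : ℝ) * (mpow ρ μ)⁻¹ * mpow (fun j => |y j|) (μ - ν))) := by
          rw [← mul_assoc, inv_mul_cancel₀ (hApos ν).ne', one_mul]
      _ ≤ (mpow a ν)⁻¹ * 1 := mul_le_mul_of_nonneg_left h1 (inv_nonneg.2 (hApos ν).le)
      _ = (mpow a ν)⁻¹ := mul_one _
  -- first conjunct: summability
  have hsum : ∀ ν : MIdx, Summable fun μ : {μ : MIdx // ν ≤ μ} =>
      ‖((mchoose μ.1 ν : ℝ) * (mpow ρ μ.1)⁻¹ * mpow y (μ.1 - ν)) • v μ.1‖ := by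
    intro ν
    refine Summable.of_nonneg_of_le (fun μ => norm_nonneg _) (fun μ => ?_)
      ((hv.subtype {μ : MIdx | ν ≤ μ}).mul_left ((mpow a ν)⁻¹))
    rw [norm_smul, Real.norm_eq_abs]
    exact mul_le_mul_of_nonneg_right (hcle ν μ.1 μ.2) (norm_nonneg _)
  refine ⟨hsum, ?_⟩
  -- weight function
  set W : MIdx → MIdx → ℝ := fun ν μ =>
    mpow a ν * ((mchoose μ ν : ℝ) * (mpow ρ μ)⁻¹ * mpow (fun j => |y j|) (μ - ν)) * ‖v μ‖
    with hW_def
  have hWnn : ∀ ν μ, 0 ≤ W ν μ := by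
    intro ν μ
    have h1 := (hApos ν).le
    have h2 := (mpow_pos hρpos μ).le
    have h3 := mpow_nonneg habs (μ - ν)
    have h4 : (0:ℝ) ≤ (mchoose μ ν : ℝ) := Nat.cast_nonneg _
    have h5 : (0:ℝ) ≤ ‖v μ‖ := norm_nonneg _
    simp only [hW_def]
    positivity
  -- Step A : bound each ‖T ν‖
  have stepA : ∀ ν : MIdx, ENNReal.ofReal ‖T ν‖
      ≤ ∑' μ : MIdx, Set.indicator {μ : MIdx | ν ≤ μ}
          (fun μ => ENNReal.ofReal (W ν μ)) μ := by
    intro ν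
    rw [← tsum_subtype]
    have hb : ‖T ν‖ ≤ ∑' μ : {μ : MIdx // ν ≤ μ}, W ν μ.1 := by
      rw [hT ν, norm_smul, Real.norm_eq_abs, abs_of_nonneg (hApos ν).le]
      have h1 : ‖∑' μ : {μ : MIdx // ν ≤ μ},
          ((mchoose μ.1 ν : ℝ) * (mpow ρ μ.1)⁻¹ * mpow y (μ.1 - ν)) • v μ.1‖
          ≤ ∑' μ : {μ : MIdx // ν ≤ μ},
            ‖((mchoose μ.1 ν : ℝ) * (mpow ρ μ.1)⁻¹ * mpow y (μ.1 - ν)) • v μ.1‖ :=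
        norm_tsum_le_tsum_norm (hsum ν)
      calc mpow a ν * ‖∑' μ : {μ : MIdx // ν ≤ μ},
            ((mchoose μ.1 ν : ℝ) * (mpow ρ μ.1)⁻¹ * mpow y (μ.1 - ν)) • v μ.1‖
          ≤ mpow a ν * ∑' μ : {μ : MIdx // ν ≤ μ},
            ‖((mchoose μ.1 ν : ℝ) * (mpow ρ μ.1)⁻¹ * mpow y (μ.1 - ν)) • v μ.1‖ :=
            mul_le_mul_of_nonneg_left h1 (hApos ν).le
        _ = ∑' μ : {μ : MIdx // ν ≤ μ}, mpow a ν *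
            ‖((mchoose μ.1 ν : ℝ) * (mpow ρ μ.1)⁻¹ * mpow y (μ.1 - ν)) • v μ.1‖ :=
            (tsum_mul_left).symm
        _ = ∑' μ : {μ : MIdx // ν ≤ μ}, W ν μ.1 := by
            refine tsum_congr fun μ => ?_
            simp only [hW_def]
            rw [norm_smul, Real.norm_eq_abs, hcabs ν μ.1]
            ring
    have hsum2 : Summable fun μ : {μ : MIdx // ν ≤ μ} => W ν μ.1 := by
      have := ((hsum ν).mul_left (mpow a ν))
      refine this.congr fun μ => ?_
      simp only [hW_def]
      rw [norm_smul, Real.norm_eq_abs, hcabs ν μ.1]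
      ring
    calc ENNReal.ofReal ‖T ν‖ ≤ ENNReal.ofReal (∑' μ : {μ : MIdx // ν ≤ μ}, W ν μ.1) :=
          ENNReal.ofReal_le_ofReal hb
      _ = ∑' μ : {μ : MIdx // ν ≤ μ}, ENNReal.ofReal (W ν μ.1) :=
          ENNReal.ofReal_tsum_of_nonneg (fun μ => hWnn ν μ.1) hsum2
  -- Step C : the column sums
  have stepC : ∀ μ : MIdx, (∑' ν : MIdx, Set.indicator {μ' : MIdx | ν ≤ μ'}
      (fun μ' => ENNReal.ofReal (W ν μ')) μ) = ENNReal.ofReal ‖v μ‖ := by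
    intro μ
    have hvanish : ∀ ν ∉ Finset.Iic μ, Set.indicator {μ' : MIdx | ν ≤ μ'}
        (fun μ' => ENNReal.ofReal (W ν μ')) μ = 0 := by
      intro ν hν
      rw [Finset.mem_Iic] at hν
      exact Set.indicator_of_notMem hν _
    rw [tsum_eq_sum hvanish]
    have heq : ∀ ν ∈ Finset.Iic μ, Set.indicator {μ' : MIdx | ν ≤ μ'}
        (fun μ' => ENNReal.ofReal (W ν μ')) μ = ENNReal.ofReal (W ν μ) := by
      intro ν hν
      rw [Finset.mem_Iic] at hν
      exact Set.indicator_of_mem hν _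
    rw [Finset.sum_congr rfl heq, ← ENNReal.ofReal_sum_of_nonneg (fun ν _ => hWnn ν μ)]
    congr 1
    have hρμ : 0 < mpow ρ μ := mpow_pos hρpos μ
    have : ∑ ν ∈ Finset.Iic μ, W ν μ
        = (∑ ν ∈ Finset.Iic μ, mpow a ν * ((mchoose μ ν : ℝ) * mpow (fun j => |y j|) (μ - ν)))
          * ((mpow ρ μ)⁻¹ * ‖v μ‖) := by
      rw [Finset.sum_mul]
      refine Finset.sum_congr rfl fun ν _ => ?_
      simp only [hW_def]
      ring
    rw [this, sum_Iic_binomial]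
    have heq2 : (fun j => a j + |y j|) = ρ := funext hAρ
    rw [heq2, ← mul_assoc, mul_inv_cancel₀ hρμ.ne', one_mul]
  -- combine
  calc ∑' ν : MIdx, ENNReal.ofReal ‖T ν‖
      ≤ ∑' ν : MIdx, ∑' μ : MIdx, Set.indicator {μ : MIdx | ν ≤ μ}
          (fun μ => ENNReal.ofReal (W ν μ)) μ := ENNReal.tsum_le_tsum stepA
    _ = ∑' μ : MIdx, ∑' ν : MIdx, Set.indicator {μ' : MIdx | ν ≤ μ'}
          (fun μ' => ENNReal.ofReal (W ν μ')) μ := ENNReal.tsum_comm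
    _ = ∑' μ : MIdx, ENNReal.ofReal ‖v μ‖ := tsum_congr stepC
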